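/- Let v_1, ..., v_n be a basis of a vector space V over ℚ and define the matrix A by a_{ii} = v_1 and a_{ij} = v_i − v_j for i ≠ j. Then for every permutation σ of {1, ..., n}, the family (a_{i,σ(i)})_{i=1}^n is linearly dependent. Hence A has no independent transversal of size n. -/

import Mathlib

theorem stmt_11 {V : Type*} [AddCommGroup V] [Module ℚ V] (n : ℕ) (hn : 2 ≤ n)
    (v : Module.Basis (Fin n) ℚ V)
    (A : Fin n → Fin n → V)
    (hdiag : ∀ i, A i i = v ⟨0, by omega⟩)
    (hoff : ∀ i j, i ≠ j → A i j = v i - v j) :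
    ∀ σ : Equiv.Perm (Fin n), ¬ LinearIndependent ℚ (fun i => A i (σ i)) := by
  intro σ hli
  by_cases hid : σ = 1
  · -- all vectors equal v 0, so not injective
    have hinj := hli.injective
    have h01 : (⟨0, by omega⟩ : Fin n) ≠ ⟨1, by omega⟩ := by
      simp [Fin.ext_iff]
    apply h01
    apply hinj
    simp [hid, hdiag]
  · -- take g = indicator of support of σ
    rw [Fintype.linearIndependent_iff] at hli
    set S : Finset (Fin n) := Finset.univ.filter (fun i => σ i ≠ i) with hS
    have hSne : S.Nonempty := by
      by_contra h
      apply hid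
      ext i
      by_contra hi
      exact h ⟨i, by simp only [hS, Finset.mem_filter, Finset.mem_univ, true_and]; exact fun h2 => hi (by simp [h2])⟩
    obtain ⟨i₀, hi₀⟩ := hSne
    have key : ∑ i, (if σ i ≠ i then (1:ℚ) else 0) • A i (σ i) = 0 := by
      have : ∀ i, (if σ i ≠ i then (1:ℚ) else 0) • A i (σ i)
          = if σ i ≠ i then v i - v (σ i) else 0 := by
        intro i
        by_cases h : σ i = i
        · simp [h]
        · simp [h, hoff i (σ i) (fun e => h e.symm)]
      simp only [this]
      rw [Finset.sum_ite, Finset.sum_const_zero, add_zero]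
      rw [Finset.sum_sub_distrib]
      have : ∑ x ∈ Finset.univ.filter (fun i => σ i ≠ i), v (σ x)
          = ∑ x ∈ Finset.univ.filter (fun i => σ i ≠ i), v x := by
        apply Finset.sum_nbij' (fun x => σ x) (fun x => σ.symm x)
        · intro a ha
          simp only [Finset.mem_filter, Finset.mem_univ, true_and] at ha ⊢
          simpa using fun h => ha (σ.injective h)
        · intro a ha
          simp only [Finset.mem_filter, Finset.mem_univ, true_and] at ha ⊢
          intro h
          rw [Equiv.apply_symm_apply] at h
          exact ha ((Equiv.symm_apply_eq σ).mp h.symm).symm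
        · intro a _; simp
        · intro a _; simp
        · intro a _; rfl
      rw [this, sub_self]
    have := hli _ key i₀
    simp only [Finset.mem_filter, Finset.mem_univ, true_and, hS] at hi₀
    simp [hi₀] at this
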